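/- Let I, J be operator ideals and τ be an ideal topology. If the Banach space E has the (I, J, τ)-approximation property and the Banach space F is isomorphic to a complemented subspace of E (i.e., there exist bounded linear operators u : F → E and v : E → F with v ∘ u = id_F), then F has the (I, J, τ)-approximation property as well. The same holds with the (I, J, τ)-weak approximation property in place of the (I, J, τ)-approximation property. -/

import Mathlib

open Filter Topology Metric Set Pointwise

universe u

variable (𝕜 : Type u) [RCLike 𝕜]

/-- An assignment, to each pair of Banach spaces over `𝕜`, of a set of bounded linear
operators between them. -/
abbrev BanachOpClass (𝕜 : Type u) [RCLike 𝕜] : Type (u + 1) :=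
  ∀ (E F : Type u) [NormedAddCommGroup E] [NormedSpace 𝕜 E] [CompleteSpace E]
    [NormedAddCommGroup F] [NormedSpace 𝕜 F] [CompleteSpace F], Set (E →L[𝕜] F)

/-- A bounded linear operator has finite rank if its range is finite dimensional. -/
def IsFiniteRankOp {E F : Type u} [NormedAddCommGroup E] [NormedSpace 𝕜 E]
    [NormedAddCommGroup F] [NormedSpace 𝕜 F] (u : E →L[𝕜] F) : Prop :=
  FiniteDimensional 𝕜 (LinearMap.range (u : E →ₗ[𝕜] F))

/-- Operator ideals in the sense of Pietsch. -/
structure IsOperatorIdeal (C : BanachOpClass 𝕜) : Prop where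
  smul_mem : ∀ (E F : Type u) [NormedAddCommGroup E] [NormedSpace 𝕜 E] [CompleteSpace E]
    [NormedAddCommGroup F] [NormedSpace 𝕜 F] [CompleteSpace F]
    (a : 𝕜) (u : E →L[𝕜] F), u ∈ C E F → a • u ∈ C E F
  add_mem : ∀ (E F : Type u) [NormedAddCommGroup E] [NormedSpace 𝕜 E] [CompleteSpace E]
    [NormedAddCommGroup F] [NormedSpace 𝕜 F] [CompleteSpace F]
    (u v : E →L[𝕜] F), u ∈ C E F → v ∈ C E F → u + v ∈ C E F
  finiteRank_mem : ∀ (E F : Type u) [NormedAddCommGroup E] [NormedSpace 𝕜 E] [CompleteSpace E]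
    [NormedAddCommGroup F] [NormedSpace 𝕜 F] [CompleteSpace F]
    (u : E →L[𝕜] F), IsFiniteRankOp 𝕜 u → u ∈ C E F
  comp_mem : ∀ (E F G H : Type u)
    [NormedAddCommGroup E] [NormedSpace 𝕜 E] [CompleteSpace E]
    [NormedAddCommGroup F] [NormedSpace 𝕜 F] [CompleteSpace F]
    [NormedAddCommGroup G] [NormedSpace 𝕜 G] [CompleteSpace G]
    [NormedAddCommGroup H] [NormedSpace 𝕜 H] [CompleteSpace H]
    (u : E →L[𝕜] F) (v : F →L[𝕜] G) (w : G →L[𝕜] H),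
    v ∈ C F G → w.comp (v.comp u) ∈ C E H

/-- An assignment of a topology to each space of bounded operators between Banach spaces. -/
abbrev OpTopologyAssignment (𝕜 : Type u) [RCLike 𝕜] : Type (u + 1) :=
  ∀ (E F : Type u) [NormedAddCommGroup E] [NormedSpace 𝕜 E] [CompleteSpace E]
    [NormedAddCommGroup F] [NormedSpace 𝕜 F] [CompleteSpace F],
    TopologicalSpace (E →L[𝕜] F)

/-- The closure of an operator class with respect to an assignment of topologies. -/
def closureClass (τ : OpTopologyAssignment 𝕜) (C : BanachOpClass 𝕜) (E F : Type u)
    [NormedAddCommGroup E] [NormedSpace 𝕜 E] [CompleteSpace E]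
    [NormedAddCommGroup F] [NormedSpace 𝕜 F] [CompleteSpace F] : Set (E →L[𝕜] F) :=
  @closure _ (τ E F) (C E F)

/-- An ideal topology: a linear topology on each operator space such that the closure of
any operator ideal is again an operator ideal. -/
structure IsIdealTopology (τ : OpTopologyAssignment 𝕜) : Prop where
  topologicalAddGroup : ∀ (E F : Type u)
    [NormedAddCommGroup E] [NormedSpace 𝕜 E] [CompleteSpace E]
    [NormedAddCommGroup F] [NormedSpace 𝕜 F] [CompleteSpace F],
    @IsTopologicalAddGroup (E →L[𝕜] F) (τ E F) _
  continuousSMul : ∀ (E F : Type u)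
    [NormedAddCommGroup E] [NormedSpace 𝕜 E] [CompleteSpace E]
    [NormedAddCommGroup F] [NormedSpace 𝕜 F] [CompleteSpace F],
    @ContinuousSMul 𝕜 (E →L[𝕜] F) _ _ (τ E F)
  closure_isOperatorIdeal : ∀ C : BanachOpClass 𝕜,
    IsOperatorIdeal 𝕜 C → IsOperatorIdeal 𝕜 (closureClass 𝕜 τ C)

/-- A Banach space `E` has the `(I, J, τ)`-approximation property if `I(F;E)` is contained in
the `τ`-closure of `J(F;E)` for every Banach space `F`. -/
def HasAP (I J : BanachOpClass 𝕜) (τ : OpTopologyAssignment 𝕜)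
    (E : Type u) [NormedAddCommGroup E] [NormedSpace 𝕜 E] [CompleteSpace E] : Prop :=
  ∀ (F : Type u) [NormedAddCommGroup F] [NormedSpace 𝕜 F] [CompleteSpace F],
    I F E ⊆ @closure _ (τ F E) (J F E)

/-- A Banach space `E` has the `(I, J, τ)`-weak approximation property if `I(E;E)` is contained
in the `τ`-closure of `J(E;E)`. -/
def HasWAP (I J : BanachOpClass 𝕜) (τ : OpTopologyAssignment 𝕜)
    (E : Type u) [NormedAddCommGroup E] [NormedSpace 𝕜 E] [CompleteSpace E] : Prop :=
  I E E ⊆ @closure _ (τ E E) (J E E)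

/-- The topology on `E →L[𝕜] F` of uniform convergence on the sets of the family `𝔖`. -/
def uniformOnTop (E F : Type u) [NormedAddCommGroup E] [NormedSpace 𝕜 E] [CompleteSpace E]
    [NormedAddCommGroup F] [NormedSpace 𝕜 F] [CompleteSpace F] (𝔖 : Set (Set E)) :
    TopologicalSpace (E →L[𝕜] F) :=
  TopologicalSpace.induced (fun u => UniformOnFun.ofFun 𝔖 (⇑u))
    (UniformOnFun.topologicalSpace E F 𝔖)

/-- The operator norm topology on each space of operators. -/
def normTopology (E F : Type u)
    [NormedAddCommGroup E] [NormedSpace 𝕜 E] [CompleteSpace E]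
    [NormedAddCommGroup F] [NormedSpace 𝕜 F] [CompleteSpace F] :
    TopologicalSpace (E →L[𝕜] F) := inferInstance

/-- The topology of pointwise convergence (uniform convergence on finite sets; the strong
operator topology). -/
def ptwiseTopology (E F : Type u)
    [NormedAddCommGroup E] [NormedSpace 𝕜 E] [CompleteSpace E]
    [NormedAddCommGroup F] [NormedSpace 𝕜 F] [CompleteSpace F] :
    TopologicalSpace (E →L[𝕜] F) := uniformOnTop 𝕜 E F {s : Set E | s.Finite}

/-- The compact-open topology: uniform convergence on compact sets. -/
def compactOpenTopology (E F : Type u)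
    [NormedAddCommGroup E] [NormedSpace 𝕜 E] [CompleteSpace E]
    [NormedAddCommGroup F] [NormedSpace 𝕜 F] [CompleteSpace F] :
    TopologicalSpace (E →L[𝕜] F) := uniformOnTop 𝕜 E F {K : Set E | IsCompact K}

/-- An assignment of a family of subsets to each Banach space. -/
abbrev SetFamilyAssignment (𝕜 : Type u) [RCLike 𝕜] : Type (u + 1) :=
  ∀ (E : Type u) [NormedAddCommGroup E] [NormedSpace 𝕜 E] [CompleteSpace E], Set (Set E)

/-- The topology of uniform convergence on the sets of the family `𝒜 E`. -/
def famTopology (𝒜 : SetFamilyAssignment 𝕜) (E F : Type u)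
    [NormedAddCommGroup E] [NormedSpace 𝕜 E] [CompleteSpace E]
    [NormedAddCommGroup F] [NormedSpace 𝕜 F] [CompleteSpace F] :
    TopologicalSpace (E →L[𝕜] F) := uniformOnTop 𝕜 E F (𝒜 E)

/-- The class of finite rank bounded operators. -/
def finRankClass (E F : Type u)
    [NormedAddCommGroup E] [NormedSpace 𝕜 E] [CompleteSpace E]
    [NormedAddCommGroup F] [NormedSpace 𝕜 F] [CompleteSpace F] : Set (E →L[𝕜] F) :=
  {u | IsFiniteRankOp 𝕜 u}

/-- The class of compact operators: those mapping the closed unit ball to a relatively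
compact set. -/
def compactClass (E F : Type u)
    [NormedAddCommGroup E] [NormedSpace 𝕜 E] [CompleteSpace E]
    [NormedAddCommGroup F] [NormedSpace 𝕜 F] [CompleteSpace F] : Set (E →L[𝕜] F) :=
  {u | IsCompact (closure (⇑u '' Metric.closedBall 0 1))}

/-- The class of all bounded operators. -/
def boundedClass (E F : Type u)
    [NormedAddCommGroup E] [NormedSpace 𝕜 E] [CompleteSpace E]
    [NormedAddCommGroup F] [NormedSpace 𝕜 F] [CompleteSpace F] : Set (E →L[𝕜] F) :=
  Set.univ

/-- A witness that `A` is an `I`-bounded subset of `E`: a Banach space `F` and an operator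
`u ∈ I(F;E)` with `A ⊆ u(B_F)`. -/
structure IBddWitness (C : BanachOpClass 𝕜) (E : Type u) [NormedAddCommGroup E]
    [NormedSpace 𝕜 E] [CompleteSpace E] (A : Set E) : Type (u + 1) where
  F : Type u
  [iG : NormedAddCommGroup F]
  [iS : NormedSpace 𝕜 F]
  [iC : CompleteSpace F]
  u : F →L[𝕜] E
  hu : u ∈ C F E
  hA : A ⊆ ⇑u '' Metric.closedBall 0 1

/-- `C_I(E)`: the `I`-bounded subsets of `E`. -/
def IBddSets (C : BanachOpClass 𝕜) (E : Type u) [NormedAddCommGroup E]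
    [NormedSpace 𝕜 E] [CompleteSpace E] : Set (Set E) :=
  {A | Nonempty (IBddWitness 𝕜 C E A)}

/-- The topology `τ_{C_I}` of uniform convergence on `I`-bounded sets. -/
def iBddTopology (C : BanachOpClass 𝕜) (E F : Type u)
    [NormedAddCommGroup E] [NormedSpace 𝕜 E] [CompleteSpace E]
    [NormedAddCommGroup F] [NormedSpace 𝕜 F] [CompleteSpace F] :
    TopologicalSpace (E →L[𝕜] F) := uniformOnTop 𝕜 E F (IBddSets 𝕜 C E)

/-- `L_I`: the class of `I`-bounded operators, i.e. those mapping the closed unit ball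
to an `I`-bounded set. -/
def LBddClass (C : BanachOpClass 𝕜) (E F : Type u)
    [NormedAddCommGroup E] [NormedSpace 𝕜 E] [CompleteSpace E]
    [NormedAddCommGroup F] [NormedSpace 𝕜 F] [CompleteSpace F] : Set (E →L[𝕜] F) :=
  {T | ⇑T '' Metric.closedBall 0 1 ∈ IBddSets 𝕜 C F}

/-- A witness that `B` is an `I`-compact subset of `E`. -/
structure ICptWitness (C : BanachOpClass 𝕜) (E : Type u) [NormedAddCommGroup E]
    [NormedSpace 𝕜 E] [CompleteSpace E] (B : Set E) : Type (u + 1) where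
  F : Type u
  [iG : NormedAddCommGroup F]
  [iS : NormedSpace 𝕜 F]
  [iC : CompleteSpace F]
  K : Set F
  hK : IsCompact K
  u : F →L[𝕜] E
  hu : u ∈ C F E
  A : Set E
  hA : A ⊆ ⇑u '' K
  hB : B = closure A

/-- `K_I(E)`: the `I`-compact subsets of `E`. -/
def ICptSets (C : BanachOpClass 𝕜) (E : Type u) [NormedAddCommGroup E]
    [NormedSpace 𝕜 E] [CompleteSpace E] : Set (Set E) :=
  {B | Nonempty (ICptWitness 𝕜 C E B)}

/-- The topology `τ_{K_I}` of uniform convergence on `I`-compact sets. -/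
def iCptTopology (C : BanachOpClass 𝕜) (E F : Type u)
    [NormedAddCommGroup E] [NormedSpace 𝕜 E] [CompleteSpace E]
    [NormedAddCommGroup F] [NormedSpace 𝕜 F] [CompleteSpace F] :
    TopologicalSpace (E →L[𝕜] F) := uniformOnTop 𝕜 E F (ICptSets 𝕜 C E)

/-- The absolutely convex hull of the terms of a sequence: all finite sums `Σ λᵢ • x_{nᵢ}`
with `Σ ‖λᵢ‖ ≤ 1`. -/
def absConvexHullSeq {E : Type u} [NormedAddCommGroup E] [NormedSpace 𝕜 E]
    (x : ℕ → E) : Set E :=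
  {y | ∃ (m : ℕ) (lam : Fin m → 𝕜) (idx : Fin m → ℕ),
    (∑ i, ‖lam i‖) ≤ 1 ∧ y = ∑ i, lam i • x (idx i)}

/-- `BR_q(E)`: the Bourgain–Reinov `q`-compact subsets of `E`. -/
def BRSets (q : ℝ) (E : Type u) [NormedAddCommGroup E] [NormedSpace 𝕜 E]
    [CompleteSpace E] : Set (Set E) :=
  {A | ∃ x : ℕ → E, Summable (fun n => ‖x n‖ ^ q) ∧ A ⊆ closure (absConvexHullSeq 𝕜 x)}

/-- The topology `τ_{BR_q}` of uniform convergence on Bourgain–Reinov `q`-compact sets. -/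
def brTopology (q : ℝ) (E F : Type u)
    [NormedAddCommGroup E] [NormedSpace 𝕜 E] [CompleteSpace E]
    [NormedAddCommGroup F] [NormedSpace 𝕜 F] [CompleteSpace F] :
    TopologicalSpace (E →L[𝕜] F) := uniformOnTop 𝕜 E F (BRSets 𝕜 q E)

/-- The Grothendieck property of an operator ideal. -/
def GrothendieckProperty (C : BanachOpClass 𝕜) : Prop :=
  ∀ (E : Type u) [NormedAddCommGroup E] [NormedSpace 𝕜 E] [CompleteSpace E] (A : Set E),
    Bornology.IsBounded A →
    (∀ ε : ℝ, 0 < ε → ∃ Aε ∈ IBddSets 𝕜 C E, A ⊆ Aε + Metric.closedBall (0 : E) ε) →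
    A ∈ IBddSets 𝕜 C E

/-- A witness that `T` factors as `T = R ∘ S` with `S` in the class `D` and `R` in the
class `C`, through some Banach space `Z`. -/
structure FactorWitness (D C : BanachOpClass 𝕜) (F E : Type u)
    [NormedAddCommGroup F] [NormedSpace 𝕜 F] [CompleteSpace F]
    [NormedAddCommGroup E] [NormedSpace 𝕜 E] [CompleteSpace E]
    (T : F →L[𝕜] E) : Type (u + 1) where
  Z : Type u
  [iG : NormedAddCommGroup Z]
  [iS : NormedSpace 𝕜 Z]
  [iC : CompleteSpace Z]
  S : F →L[𝕜] Z
  R : Z →L[𝕜] E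
  hS : S ∈ D F Z
  hR : R ∈ C Z E
  heq : T = R.comp S

/-- the (I, J, τ)-AP and (I, J, τ)-WAP pass to complemented subspaces. -/
theorem statement4 (I J : BanachOpClass 𝕜)
    (hI : IsOperatorIdeal 𝕜 I) (hJ : IsOperatorIdeal 𝕜 J)
    (τ : OpTopologyAssignment 𝕜) (hτ : IsIdealTopology 𝕜 τ)
    (E F : Type u) [NormedAddCommGroup E] [NormedSpace 𝕜 E] [CompleteSpace E] [NormedAddCommGroup F] [NormedSpace 𝕜 F] [CompleteSpace F]
    (u : F →L[𝕜] E) (v : E →L[𝕜] F) (huv : v.comp u = ContinuousLinearMap.id 𝕜 F) :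
    (HasAP 𝕜 I J τ E → HasAP 𝕜 I J τ F) ∧
    (HasWAP 𝕜 I J τ E → HasWAP 𝕜 I J τ F) := by
  have hvu : ∀ y : F, v (u y) = y := fun y => by
    have := congrArg (fun w : F →L[𝕜] F => w y) huv
    simpa using this
  have hK := hτ.closure_isOperatorIdeal J hJ
  constructor
  · intro hE G _ _ _ T hT
    have h1 : u.comp (T.comp (ContinuousLinearMap.id 𝕜 G)) ∈ I G E :=
      hI.comp_mem G G F E (ContinuousLinearMap.id 𝕜 G) T u hT
    have h2 : u.comp (T.comp (ContinuousLinearMap.id 𝕜 G)) ∈ closureClass 𝕜 τ J G E :=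
      hE G h1
    have h3 := hK.comp_mem G G E F (ContinuousLinearMap.id 𝕜 G)
      (u.comp (T.comp (ContinuousLinearMap.id 𝕜 G))) v h2
    have heq : v.comp ((u.comp (T.comp (ContinuousLinearMap.id 𝕜 G))).comp
        (ContinuousLinearMap.id 𝕜 G)) = T := by
      ext x
      simp [hvu]
    rw [heq] at h3
    exact h3
  · intro hE T hT
    have h1 : u.comp (T.comp v) ∈ I E E := hI.comp_mem E F F E v T u hT
    have h2 : u.comp (T.comp v) ∈ closureClass 𝕜 τ J E E := hE h1
    have h3 := hK.comp_mem F E E F u (u.comp (T.comp v)) v h2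
    have heq : v.comp ((u.comp (T.comp v)).comp u) = T := by
      ext x
      simp [hvu]
    rw [heq] at h3
    exact h3
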